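/- Every extrinsic symmetric triple (g,⟨·,·⟩,D,θ) decomposes into a direct sum of extrinsic symmetric triples: there exist ideals g₁ and g₂ of g such that g = g₁ ⊕ g₂, ⟨g₁,g₂⟩ = 0, the restriction of ⟨·,·⟩ to each gᵢ is nondegenerate, D(gᵢ) ⊆ gᵢ and θ(gᵢ) = gᵢ for i = 1,2, the Lie algebra g₁ is semisimple or zero, the Lie algebra g₂ contains no nonzero ideal that is a simple Lie algebra, and each gᵢ equipped with the restricted form, derivation and involution again satisfies the condition [gᵢ ∩ g₊ ∩ g⁻, gᵢ ∩ g₊ ∩ g⁻] = gᵢ ∩ g₊ ∩ g⁺. -/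

import Mathlib

/-- The span of all brackets of elements of two submodules of a Lie algebra. -/
def bracketSpan {g : Type*} [LieRing g] [LieAlgebra ℝ g] (s t : Submodule ℝ g) :
    Submodule ℝ g :=
  Submodule.span ℝ {z | ∃ x ∈ s, ∃ y ∈ t, z = ⁅x, y⁆}

section Aux
variable {g : Type*} [LieRing g] [LieAlgebra ℝ g]

/-- The sum of all simple ideals of a Lie algebra. -/
def simpleSum (g : Type*) [LieRing g] [LieAlgebra ℝ g] : LieIdeal ℝ g :=
  sSup {I : LieIdeal ℝ g | LieAlgebra.IsSimple ℝ I}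

lemma simple_le_simpleSum {s : LieIdeal ℝ g} (hs : LieAlgebra.IsSimple ℝ s) :
    s ≤ simpleSum g :=
  le_sSup (show s ∈ {I : LieIdeal ℝ g | LieAlgebra.IsSimple ℝ I} from hs)

/-- A `g`-stable subspace of a simple ideal is `⊥` or everything. -/
lemma aux_dichotomy (s : LieIdeal ℝ g) (hs : LieAlgebra.IsSimple ℝ s)
    (V : Submodule ℝ g) (hVs : V ≤ s.toSubmodule)
    (hV : ∀ (x v : g), v ∈ V → ⁅x, v⁆ ∈ V) :
    V = ⊥ ∨ V = s.toSubmodule := by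
  let J : LieIdeal ℝ s :=
    { Submodule.comap (s.toSubmodule.subtype) V with
      lie_mem := by
        intro x m hm
        exact hV _ _ hm }
  rcases hs.eq_bot_or_eq_top J with hJ | hJ
  · left
    rw [eq_bot_iff]
    intro v hv
    have hvs : v ∈ s := hVs hv
    have : (⟨v, hvs⟩ : s) ∈ J := hv
    rw [hJ] at this
    simpa using (LieSubmodule.mem_bot (R := ℝ) (L := s) _).mp this
  · right
    refine le_antisymm hVs ?_
    intro v hv
    have : (⟨v, hv⟩ : s) ∈ J := by rw [hJ]; trivial
    exact this

lemma aux_nonabelian (s : LieIdeal ℝ g) (hs : LieAlgebra.IsSimple ℝ s) :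
    ∃ a ∈ s, ∃ b ∈ s, ⁅a, b⁆ ≠ (0 : g) := by
  by_contra h
  push_neg at h
  exact hs.non_abelian ⟨fun u v => Subtype.ext (by simpa using h u u.2 v v.2)⟩

/-- Distinct simple ideals commute. -/
lemma aux_commute (s t : LieIdeal ℝ g) (hs : LieAlgebra.IsSimple ℝ s)
    (ht : LieAlgebra.IsSimple ℝ t) (hst : s ≠ t) {x y : g} (hx : x ∈ s) (hy : y ∈ t) :
    ⁅x, y⁆ = 0 := by
  set U : Submodule ℝ g := s.toSubmodule ⊓ t.toSubmodule with hU
  have hstab : ∀ (w v : g), v ∈ U → ⁅w, v⁆ ∈ U := fun w v hv =>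
    ⟨s.lie_mem hv.1, t.lie_mem hv.2⟩
  have h1 := aux_dichotomy s hs U inf_le_left hstab
  have h2 := aux_dichotomy t ht U inf_le_right hstab
  have hUbot : U = ⊥ := by
    rcases h1 with h1 | h1
    · exact h1
    rcases h2 with h2 | h2
    · exact h2
    exact absurd ((LieSubmodule.toSubmodule_inj _ _).mp (h1.symm.trans h2)) hst
  have : ⁅x, y⁆ ∈ U := ⟨by
    have : ⁅y, x⁆ ∈ s := s.lie_mem hx
    simpa using s.toSubmodule.neg_mem this, t.lie_mem hy⟩
  rw [hUbot] at this
  simpa using this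

/-- An element of a simple ideal commuting with the whole ideal is zero. -/
lemma aux_center (s : LieIdeal ℝ g) (hs : LieAlgebra.IsSimple ℝ s)
    {v : g} (hv : v ∈ s) (hc : ∀ y ∈ s, ⁅v, y⁆ = 0) : v = 0 := by
  set C : Submodule ℝ g :=
    { carrier := {w : g | w ∈ s ∧ ∀ y ∈ s, ⁅w, y⁆ = 0}
      add_mem' := fun ha hb => ⟨s.add_mem ha.1 hb.1, fun y hy => by
        rw [add_lie, ha.2 y hy, hb.2 y hy, add_zero]⟩
      zero_mem' := ⟨s.zero_mem, fun y _ => zero_lie y⟩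
      smul_mem' := fun c w hw => ⟨s.smul_mem c hw.1, fun y hy => by
        rw [smul_lie, hw.2 y hy, smul_zero]⟩ } with hC
  have hstab : ∀ (x w : g), w ∈ C → ⁅x, w⁆ ∈ C := by
    intro x w hw
    refine ⟨s.lie_mem hw.1, fun y hy => ?_⟩
    rw [lie_lie, hw.2 y hy, hw.2 ⁅x, y⁆ (s.lie_mem hy), lie_zero, sub_zero]
  rcases aux_dichotomy s hs C (fun _ h => h.1) hstab with hbot | htop
  · have : v ∈ C := ⟨hv, hc⟩
    rw [hbot] at this
    simpa using this
  · obtain ⟨a, ha, b, hb, hab⟩ := aux_nonabelian s hs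
    have haC : a ∈ C := by rw [htop]; exact ha
    exact absurd (haC.2 b hb) hab

/-- An element of the sum of all simple ideals commuting with every simple ideal is zero. -/
lemma aux_sum_zero {x : g} (hx : x ∈ simpleSum g)
    (hc : ∀ s : LieIdeal ℝ g, LieAlgebra.IsSimple ℝ s → ∀ y ∈ s, ⁅x, y⁆ = 0) : x = 0 := by
  classical
  have hx' : x ∈ ⨆ i : {I : LieIdeal ℝ g | LieAlgebra.IsSimple ℝ I},
      ((i : LieIdeal ℝ g) : Submodule ℝ g) := by
    rw [show (simpleSum g) = sSup {I : LieIdeal ℝ g | LieAlgebra.IsSimple ℝ I} from rfl,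
      ← LieSubmodule.mem_toSubmodule, LieSubmodule.sSup_toSubmodule_eq_iSup] at hx
    rwa [iSup_subtype'] at hx
  obtain ⟨f, hf, hsum⟩ := (Submodule.mem_iSup_iff_exists_finsupp _ x).mp hx'
  have hzero : ∀ j : {I : LieIdeal ℝ g | LieAlgebra.IsSimple ℝ I}, f j = 0 := by
    intro j
    by_cases hjs : j ∈ f.support
    · apply aux_center (j : LieIdeal ℝ g) j.2 (hf j)
      intro y hy
      have hxy : ⁅x, y⁆ = 0 := hc _ j.2 y hy
      have hsumlie : ⁅x, y⁆ = ∑ i ∈ f.support, ⁅f i, y⁆ := by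
        rw [← hsum, Finsupp.sum]
        exact map_sum (AddMonoidHom.mk' (fun w => ⁅w, y⁆) (fun a b => add_lie a b y)) _ _
      rw [Finset.sum_eq_single j (fun i _ hij => aux_commute _ _ i.2 j.2
          (fun h => hij (Subtype.ext h)) (hf i) hy) (fun h => absurd h (by simpa using hjs))]
          at hsumlie
      rw [hxy] at hsumlie
      exact hsumlie.symm
    · simpa using hjs
  rw [← hsum, Finsupp.sum]
  apply Finset.sum_eq_zero
  intro i _
  exact hzero i

/-- A simple ideal equals its derived ideal. -/
lemma aux_derived (s : LieIdeal ℝ g) (hs : LieAlgebra.IsSimple ℝ s) :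
    (⁅s, s⁆ : LieIdeal ℝ g).toSubmodule = s.toSubmodule := by
  rcases aux_dichotomy s hs (⁅s, s⁆ : LieIdeal ℝ g).toSubmodule
      ((LieSubmodule.toSubmodule_le_toSubmodule _ _).mpr (LieSubmodule.lie_le_left s s))
      (fun x v hv => (⁅s, s⁆ : LieIdeal ℝ g).lie_mem hv) with h | h
  · obtain ⟨a, ha, b, hb, hab⟩ := aux_nonabelian s hs
    have : ⁅a, b⁆ ∈ (⁅s, s⁆ : LieIdeal ℝ g) := LieSubmodule.lie_mem_lie ha hb
    rw [← LieSubmodule.mem_toSubmodule, h] at this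
    exact absurd (by simpa using this) hab
  · exact h

/-- A derivation preserves every simple ideal. -/
lemma aux_Dstable (s : LieIdeal ℝ g) (hs : LieAlgebra.IsSimple ℝ s)
    (D : g →ₗ[ℝ] g) (hDder : ∀ x y : g, D ⁅x, y⁆ = ⁅D x, y⁆ + ⁅x, D y⁆)
    {v : g} (hv : v ∈ s) : D v ∈ s := by
  let T : LieIdeal ℝ g :=
    { carrier := {w : g | w ∈ s ∧ D w ∈ s}
      add_mem' := fun ha hb => ⟨s.add_mem ha.1 hb.1, by rw [map_add]; exact s.add_mem ha.2 hb.2⟩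
      zero_mem' := ⟨s.zero_mem, by rw [map_zero]; exact s.zero_mem⟩
      smul_mem' := fun c w hw => ⟨s.smul_mem c hw.1, by rw [map_smul]; exact s.smul_mem c hw.2⟩
      lie_mem := by
        intro x m hm
        refine ⟨s.lie_mem hm.1, ?_⟩
        rw [hDder]
        exact s.add_mem (s.lie_mem hm.1) (s.lie_mem hm.2) }
  have hle : (⁅s, s⁆ : LieIdeal ℝ g) ≤ T := by
    rw [LieSubmodule.lieIdeal_oper_eq_span]
    apply (LieSubmodule.lieSpan_le (R := ℝ) (L := g)).mpr
    rintro m ⟨x, y, rfl⟩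
    refine ⟨s.lie_mem y.2, ?_⟩
    rw [hDder]
    refine s.add_mem (s.lie_mem y.2) ?_
    have h1 : ⁅D (y : g), (x : g)⁆ ∈ s := s.lie_mem x.2
    have h2 : ⁅(x : g), D (y : g)⁆ = -⁅D (y : g), (x : g)⁆ := (lie_skew _ _).symm
    rw [h2]
    exact s.neg_mem h1
  have hv' : v ∈ (⁅s, s⁆ : LieIdeal ℝ g) := by
    rw [← LieSubmodule.mem_toSubmodule, aux_derived s hs]
    exact hv
  exact (hle hv').2

/-- The image of a simple ideal under an involutive automorphism is a simple ideal. -/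
lemma aux_theta (θ : g →ₗ[ℝ] g) (hθ2 : ∀ x, θ (θ x) = x)
    (hθlie : ∀ x y : g, θ ⁅x, y⁆ = ⁅θ x, θ y⁆)
    (s : LieIdeal ℝ g) (hs : LieAlgebra.IsSimple ℝ s) :
    ∃ t : LieIdeal ℝ g, LieAlgebra.IsSimple ℝ t ∧
      t.toSubmodule = Submodule.map θ s.toSubmodule := by
  refine ⟨{ Submodule.map θ s.toSubmodule with
    lie_mem := by
      rintro x m ⟨v, hv, rfl⟩
      exact ⟨⁅θ x, v⁆, s.lie_mem hv, by rw [hθlie, hθ2]⟩ }, ?_, rfl⟩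
  set t : LieIdeal ℝ g := { Submodule.map θ s.toSubmodule with
    lie_mem := by
      rintro x m ⟨v, hv, rfl⟩
      exact ⟨⁅θ x, v⁆, s.lie_mem hv, by rw [hθlie, hθ2]⟩ } with ht
  have hmem : ∀ u : g, u ∈ t ↔ ∃ v ∈ s, θ v = u := fun u => Iff.rfl
  have hφmem : ∀ w : s, θ (w : g) ∈ t := fun w => ⟨w, w.2, rfl⟩
  let φ : s →ₗ[ℝ] t := (θ.comp s.toSubmodule.subtype).codRestrict t.toSubmodule
    (fun w => hφmem w)
  have hφcoe : ∀ w : s, (φ w : g) = θ (w : g) := fun w => rfl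
  constructor
  · intro J
    let J' : LieIdeal ℝ s :=
      { Submodule.comap φ J.toSubmodule with
        lie_mem := by
          intro x m hm
          have hbr : φ ⁅x, m⁆ = ⁅φ x, φ m⁆ := by
            apply Subtype.ext
            show θ (⁅(x : g), (m : g)⁆) = ⁅θ (x : g), θ (m : g)⁆
            exact hθlie _ _
          have hm' : φ m ∈ J.toSubmodule := hm
          show φ ⁅x, m⁆ ∈ J.toSubmodule
          rw [hbr]
          exact J.lie_mem hm' }
    rcases hs.eq_bot_or_eq_top J' with h | h
    · left
      rw [eq_bot_iff]
      intro u hu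
      obtain ⟨v, hv, hvu⟩ := (hmem u).mp u.2
      have hφv : φ ⟨v, hv⟩ = u := Subtype.ext (by rw [hφcoe]; exact hvu)
      have : (⟨v, hv⟩ : s) ∈ J' := by
        show φ ⟨v, hv⟩ ∈ J.toSubmodule
        rw [hφv]; exact hu
      rw [h] at this
      have hv0 : v = (0 : g) := by simpa using (LieSubmodule.mem_bot (R := ℝ) (L := s) _).mp this
      have : u = (0 : t) := Subtype.ext (by
        rw [← hvu, hv0, map_zero]; rfl)
      simp [this]
    · right
      rw [eq_top_iff]
      intro u _
      obtain ⟨v, hv, hvu⟩ := (hmem u).mp u.2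
      have : (⟨v, hv⟩ : s) ∈ J' := by rw [h]; trivial
      have hφv : φ ⟨v, hv⟩ = u := Subtype.ext (by rw [hφcoe]; exact hvu)
      rw [← hφv]
      exact this
  · intro habs
    obtain ⟨a, ha, b, hb, hab⟩ := aux_nonabelian s hs
    have h0 : (⁅θ a, θ b⁆ : g) = 0 :=
      congrArg (fun (w : t) => (w : g))
        (habs.trivial ⟨θ a, hφmem ⟨a, ha⟩⟩ ⟨θ b, hφmem ⟨b, hb⟩⟩)
    rw [← hθlie] at h0
    have : ⁅a, b⁆ = 0 := by
      have h2 := congrArg θ h0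
      rw [hθ2, map_zero] at h2
      exact h2
    exact hab this

/-- Every abelian ideal of the sum of all simple ideals is trivial. -/
lemma aux_no_abelian (J : LieIdeal ℝ ↥(simpleSum g)) (hJab : IsLieAbelian ↥J) : J = ⊥ := by
  have hkill : ∀ (s : LieIdeal ℝ g), LieAlgebra.IsSimple ℝ s →
      ∀ v : g, v ∈ s → ∀ hv : v ∈ simpleSum g, (⟨v, hv⟩ : simpleSum g) ∈ J → v = 0 := by
    intro s hs
    have hsle : s.toSubmodule ≤ (simpleSum g).toSubmodule :=
      (LieSubmodule.toSubmodule_le_toSubmodule _ _).mpr (simple_le_simpleSum hs)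
    let ψ : s →ₗ[ℝ] simpleSum g := Submodule.inclusion hsle
    let J' : LieIdeal ℝ s :=
      { Submodule.comap ψ J.toSubmodule with
        lie_mem := by
          intro x m hm
          have hm' : ψ m ∈ J.toSubmodule := hm
          show ψ ⁅x, m⁆ ∈ J.toSubmodule
          have : ψ ⁅x, m⁆ = ⁅ψ x, ψ m⁆ := Subtype.ext rfl
          rw [this]
          exact J.lie_mem hm' }
    have hJ'bot : J' = ⊥ := by
      rcases hs.eq_bot_or_eq_top J' with h | h
      · exact h
      · exfalso
        obtain ⟨a, ha, b, hb, hab⟩ := aux_nonabelian s hs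
        have hA : ψ ⟨a, ha⟩ ∈ J := by
          have : (⟨a, ha⟩ : s) ∈ J' := by rw [h]; trivial
          exact this
        have hB : ψ ⟨b, hb⟩ ∈ J := by
          have : (⟨b, hb⟩ : s) ∈ J' := by rw [h]; trivial
          exact this
        have h0 := hJab.trivial (⟨ψ ⟨a, ha⟩, hA⟩ : J) (⟨ψ ⟨b, hb⟩, hB⟩ : J)
        have h0' : ⁅a, b⁆ = (0 : g) := by
          have := congrArg (fun w : J => (((w : simpleSum g)) : g)) h0
          exact this
        exact hab h0'
    intro v hvs hv hvJ
    have : (⟨v, hvs⟩ : s) ∈ J' := by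
      show ψ ⟨v, hvs⟩ ∈ J.toSubmodule
      have : ψ ⟨v, hvs⟩ = ⟨v, hv⟩ := Subtype.ext rfl
      rw [this]
      exact hvJ
    rw [hJ'bot] at this
    simpa using (LieSubmodule.mem_bot (R := ℝ) (L := s) _).mp this
  rw [eq_bot_iff]
  intro x hx
  have hx0 : (x : g) = 0 := by
    apply aux_sum_zero x.2
    intro s hs y hy
    have hyg₁ : y ∈ simpleSum g := simple_le_simpleSum hs hy
    have hJmem : ⁅(⟨y, hyg₁⟩ : simpleSum g), x⁆ ∈ J := J.lie_mem hx
    have hws : ⁅y, (x : g)⁆ ∈ s := by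
      have h1 : ⁅(x : g), y⁆ ∈ s := s.lie_mem hy
      have h2 : ⁅y, (x : g)⁆ = -⁅(x : g), y⁆ := (lie_skew _ _).symm
      rw [h2]; exact s.neg_mem h1
    have h0 : ⁅y, (x : g)⁆ = 0 := by
      apply hkill s hs _ hws ((simpleSum g).lie_mem x.2)
      have : (⟨⁅y, (x : g)⁆, (simpleSum g).lie_mem x.2⟩ : simpleSum g)
          = ⁅(⟨y, hyg₁⟩ : simpleSum g), x⁆ := Subtype.ext rfl
      rw [this]
      exact hJmem
    rw [← lie_skew, h0, neg_zero]
  have : x = (0 : simpleSum g) := Subtype.ext hx0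
  simp [this]

lemma aux_sup_le {T : Submodule ℝ g}
    (hT : ∀ s : LieIdeal ℝ g, LieAlgebra.IsSimple ℝ s → s.toSubmodule ≤ T) :
    (simpleSum g).toSubmodule ≤ T := by
  rw [simpleSum, LieSubmodule.sSup_toSubmodule_eq_iSup]
  exact iSup₂_le fun s hs => hT s hs

/-- The restriction of the invariant form to the sum of simple ideals has trivial radical. -/
lemma aux_disjoint (B : LinearMap.BilinForm ℝ g)
    (hsymm : ∀ x y, B x y = B y x) (hnd : B.Nondegenerate)
    (hinv : ∀ x y z : g, B ⁅x, y⁆ z + B y ⁅x, z⁆ = 0) :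
    Disjoint (simpleSum g).toSubmodule (B.orthogonal (simpleSum g).toSubmodule) := by
  rw [disjoint_iff, eq_bot_iff]
  intro x hx
  obtain ⟨hx1, hx2⟩ := Submodule.mem_inf.mp hx
  rw [LinearMap.BilinForm.mem_orthogonal_iff] at hx2
  have hRstab : ∀ (w v : g), v ∈ (simpleSum g) →
      (∀ n ∈ simpleSum g, B n v = 0) → (∀ n ∈ simpleSum g, B n ⁅w, v⁆ = 0) := by
    intro w v hv hvorth n hn
    have h1 := hinv w n v
    have h2 : B ⁅w, n⁆ v = 0 := by
      rw [hsymm]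
      have := hvorth ⁅w, n⁆ ((simpleSum g).lie_mem hn)
      rw [hsymm] at this
      exact this
    linarith [h1, h2]
  have key : ∀ (s : LieIdeal ℝ g), LieAlgebra.IsSimple ℝ s → ∀ y ∈ s, ⁅x, y⁆ = 0 := by
    intro s hs y hy
    set Rs : Submodule ℝ g :=
      { carrier := {v : g | v ∈ s ∧ ∀ n ∈ simpleSum g, B n v = 0}
        add_mem' := fun ha hb => ⟨s.add_mem ha.1 hb.1, fun n hn => by
          rw [map_add, ha.2 n hn, hb.2 n hn, add_zero]⟩
        zero_mem' := ⟨s.zero_mem, fun n _ => map_zero _⟩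
        smul_mem' := fun c v hv => ⟨s.smul_mem c hv.1, fun n hn => by
          rw [map_smul, hv.2 n hn, smul_zero]⟩ } with hRs
    have hRsstab : ∀ (w v : g), v ∈ Rs → ⁅w, v⁆ ∈ Rs := by
      intro w v hv
      exact ⟨s.lie_mem hv.1, hRstab w v (simple_le_simpleSum hs hv.1) hv.2⟩
    have hRsbot : Rs = ⊥ := by
      rcases aux_dichotomy s hs Rs (fun v hv => hv.1) hRsstab with h | h
      · exact h
      · exfalso
        obtain ⟨a, ha, b, hb, hab⟩ := aux_nonabelian s hs
        apply hab
        apply hnd.1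
        intro z
        have h1 := hinv a b z
        have hbRs : b ∈ Rs := by rw [h]; exact hb
        have h2 : B b ⁅a, z⁆ = 0 := by
          rw [hsymm]
          exact hbRs.2 _ (simple_le_simpleSum hs (by
            have h4 : ⁅z, a⁆ ∈ s := s.lie_mem ha
            have h3 : ⁅a, z⁆ = -⁅z, a⁆ := (lie_skew _ _).symm
            rw [h3]; exact s.neg_mem h4))
        linarith
    have hxRs : ⁅y, x⁆ ∈ Rs := by
      refine ⟨?_, ?_⟩
      · have h3 : ⁅y, x⁆ = -⁅x, y⁆ := (lie_skew _ _).symm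
        rw [h3]
        exact s.neg_mem (s.lie_mem hy)
      · exact hRstab y x hx1 (fun n hn => hx2 n hn)
    rw [hRsbot] at hxRs
    have : ⁅y, x⁆ = 0 := by simpa using hxRs
    rw [← lie_skew, this, neg_zero]
  have := aux_sum_zero hx1 key
  simp [this]

end Aux

/-- Every extrinsic symmetric triple decomposes into the orthogonal direct sum of an
extrinsic symmetric triple that is semisimple or zero and one without simple ideals. -/
theorem stmt1 {g : Type*} [LieRing g] [LieAlgebra ℝ g] [Module.Finite ℝ g]
    (B : LinearMap.BilinForm ℝ g)
    (hsymm : ∀ x y, B x y = B y x)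
    (hnd : B.Nondegenerate)
    (hinv : ∀ x y z : g, B ⁅x, y⁆ z + B y ⁅x, z⁆ = 0)
    (D : g →ₗ[ℝ] g)
    (hDder : ∀ x y : g, D ⁅x, y⁆ = ⁅D x, y⁆ + ⁅x, D y⁆)
    (hDskew : ∀ x y, B (D x) y = -(B x (D y)))
    (hD3 : D ∘ₗ D ∘ₗ D = -D)
    (θ : g →ₗ[ℝ] g)
    (hθ2 : θ ∘ₗ θ = LinearMap.id)
    (hθlie : ∀ x y : g, θ ⁅x, y⁆ = ⁅θ x, θ y⁆)
    (hθiso : ∀ x y, B (θ x) (θ y) = B x y)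
    (hDθ : D ∘ₗ θ = -(θ ∘ₗ D))
    (hext : bracketSpan
        (LinearMap.ker (θ - LinearMap.id) ⊓ LinearMap.ker (D ∘ₗ D + LinearMap.id))
        (LinearMap.ker (θ - LinearMap.id) ⊓ LinearMap.ker (D ∘ₗ D + LinearMap.id)) =
        LinearMap.ker (θ - LinearMap.id) ⊓ LinearMap.ker D) :
    ∃ g₁ g₂ : LieIdeal ℝ g,
      IsCompl g₁.toSubmodule g₂.toSubmodule ∧
      (∀ x ∈ g₁, ∀ y ∈ g₂, B x y = 0) ∧
      (B.restrict g₁.toSubmodule).Nondegenerate ∧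
      (B.restrict g₂.toSubmodule).Nondegenerate ∧
      (∀ x ∈ g₁, D x ∈ g₁) ∧ (∀ x ∈ g₂, D x ∈ g₂) ∧
      Submodule.map θ g₁.toSubmodule = g₁.toSubmodule ∧
      Submodule.map θ g₂.toSubmodule = g₂.toSubmodule ∧
      (g₁ = ⊥ ∨ LieAlgebra.IsSemisimple ℝ g₁) ∧
      (¬ ∃ I : LieIdeal ℝ g, I ≠ ⊥ ∧ I ≤ g₂ ∧ LieAlgebra.IsSimple ℝ I) ∧
      bracketSpan
          (g₁.toSubmodule ⊓ (LinearMap.ker (θ - LinearMap.id) ⊓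
            LinearMap.ker (D ∘ₗ D + LinearMap.id)))
          (g₁.toSubmodule ⊓ (LinearMap.ker (θ - LinearMap.id) ⊓
            LinearMap.ker (D ∘ₗ D + LinearMap.id))) =
        g₁.toSubmodule ⊓ (LinearMap.ker (θ - LinearMap.id) ⊓ LinearMap.ker D) ∧
      bracketSpan
          (g₂.toSubmodule ⊓ (LinearMap.ker (θ - LinearMap.id) ⊓
            LinearMap.ker (D ∘ₗ D + LinearMap.id)))
          (g₂.toSubmodule ⊓ (LinearMap.ker (θ - LinearMap.id) ⊓
            LinearMap.ker (D ∘ₗ D + LinearMap.id))) =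
        g₂.toSubmodule ⊓ (LinearMap.ker (θ - LinearMap.id) ⊓ LinearMap.ker D) := by
  classical
  have hθ2' : ∀ x, θ (θ x) = x := fun x => by
    simpa using LinearMap.congr_fun hθ2 x
  have hBrefl : B.IsRefl := fun x y h => by rw [hsymm]; exact h
  have hBinv : B.lieInvariant g := fun x y z => by
    have := hinv x y z; linarith
  set G1 : LieIdeal ℝ g := simpleSum g with hG1
  let G2 : LieIdeal ℝ g := LieAlgebra.InvariantForm.orthogonal B hBinv G1
  have hG2sub : G2.toSubmodule = B.orthogonal G1.toSubmodule := rfl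
  have hG2mem : ∀ y : g, y ∈ G2 ↔ ∀ n ∈ G1, B n y = 0 :=
    fun y => LieAlgebra.InvariantForm.mem_orthogonal B hBinv G1 y
  have hdisj : Disjoint G1.toSubmodule G2.toSubmodule := by
    rw [hG2sub]; exact aux_disjoint B hsymm hnd hinv
  have hcompl : IsCompl G1.toSubmodule G2.toSubmodule := by
    rw [hG2sub]
    exact (LinearMap.BilinForm.isCompl_orthogonal_iff_disjoint hBrefl).mpr
      (by rw [← hG2sub] at *; exact hdisj)
  -- both zero from sum zero
  have hzero2 : ∀ u ∈ G1.toSubmodule, ∀ v ∈ G2.toSubmodule, u + v = 0 → u = 0 ∧ v = 0 := by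
    intro u hu v hv huv
    have huv' : u = -v := eq_neg_of_add_eq_zero_left huv
    have hu2 : u ∈ G2.toSubmodule := huv' ▸ G2.toSubmodule.neg_mem hv
    have hu0 : u = 0 := by
      have := hdisj.le_bot (Submodule.mem_inf.mpr ⟨hu, hu2⟩)
      simpa using this
    refine ⟨hu0, ?_⟩
    rw [hu0, zero_add] at huv
    exact huv
  -- D-stability of G1
  have hDG1 : ∀ v ∈ G1, D v ∈ G1 := by
    have hle : G1.toSubmodule ≤ Submodule.comap D G1.toSubmodule :=
      aux_sup_le (fun s hs => fun v hv =>
        (LieSubmodule.toSubmodule_le_toSubmodule _ _).mpr (simple_le_simpleSum hs)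
          (aux_Dstable s hs D hDder hv))
    intro v hv
    exact hle hv
  -- θ-stability of G1
  have hθG1 : ∀ v ∈ G1, θ v ∈ G1 := by
    have hle : G1.toSubmodule ≤ Submodule.comap θ G1.toSubmodule :=
      aux_sup_le (fun s hs => fun v hv => by
        obtain ⟨t, ht, htsub⟩ := aux_theta θ hθ2' hθlie s hs
        have : θ v ∈ t.toSubmodule := by
          rw [htsub]; exact ⟨v, hv, rfl⟩
        exact (LieSubmodule.toSubmodule_le_toSubmodule _ _).mpr
          (simple_le_simpleSum ht) this)
    intro v hv
    exact hle hv
  have hDG2 : ∀ v ∈ G2, D v ∈ G2 := by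
    intro v hv
    rw [hG2mem] at hv ⊢
    intro n hn
    rw [hsymm, hDskew, hsymm, neg_eq_zero]
    exact hv (D n) (hDG1 n hn)
  have hθG2 : ∀ v ∈ G2, θ v ∈ G2 := by
    intro v hv
    rw [hG2mem] at hv ⊢
    intro n hn
    have : B (θ (θ n)) (θ v) = B (θ n) v := hθiso (θ n) v
    rw [hθ2'] at this
    rw [this]
    exact hv (θ n) (hθG1 n hn)
  have hmapθ1 : Submodule.map θ G1.toSubmodule = G1.toSubmodule := by
    apply le_antisymm
    · rintro _ ⟨v, hv, rfl⟩
      exact hθG1 v hv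
    · intro v hv
      exact ⟨θ v, hθG1 v hv, hθ2' v⟩
  have hmapθ2 : Submodule.map θ G2.toSubmodule = G2.toSubmodule := by
    apply le_antisymm
    · rintro _ ⟨v, hv, rfl⟩
      exact hθG2 v hv
    · intro v hv
      exact ⟨θ v, hθG2 v hv, hθ2' v⟩
  -- decomposition lemmas
  have hdec : ∀ (E : g →ₗ[ℝ] g), (∀ v ∈ G1, E v ∈ G1) → (∀ v ∈ G2, E v ∈ G2) →
      ∀ x, E x = 0 → ∀ a ∈ G1.toSubmodule, ∀ b ∈ G2.toSubmodule, a + b = x →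
      E a = 0 ∧ E b = 0 := by
    intro E hE1 hE2 x hx a ha b hb hab
    apply hzero2 (E a) (hE1 a ha) (E b) (hE2 b hb)
    rw [← map_add, hab, hx]
  set P : Submodule ℝ g :=
    LinearMap.ker (θ - LinearMap.id) ⊓ LinearMap.ker (D ∘ₗ D + LinearMap.id) with hP
  set Q : Submodule ℝ g := LinearMap.ker (θ - LinearMap.id) ⊓ LinearMap.ker D with hQ
  have hθstab1 : ∀ v ∈ G1, (θ - LinearMap.id : g →ₗ[ℝ] g) v ∈ G1 := by
    intro v hv
    simp only [LinearMap.sub_apply, LinearMap.id_apply]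
    exact G1.toSubmodule.sub_mem (hθG1 v hv) hv
  have hθstab2 : ∀ v ∈ G2, (θ - LinearMap.id : g →ₗ[ℝ] g) v ∈ G2 := by
    intro v hv
    simp only [LinearMap.sub_apply, LinearMap.id_apply]
    exact G2.toSubmodule.sub_mem (hθG2 v hv) hv
  have hD2stab1 : ∀ v ∈ G1, (D ∘ₗ D + LinearMap.id : g →ₗ[ℝ] g) v ∈ G1 := by
    intro v hv
    simp only [LinearMap.add_apply, LinearMap.comp_apply, LinearMap.id_apply]
    exact G1.toSubmodule.add_mem (hDG1 _ (hDG1 v hv)) hv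
  have hD2stab2 : ∀ v ∈ G2, (D ∘ₗ D + LinearMap.id : g →ₗ[ℝ] g) v ∈ G2 := by
    intro v hv
    simp only [LinearMap.add_apply, LinearMap.comp_apply, LinearMap.id_apply]
    exact G2.toSubmodule.add_mem (hDG2 _ (hDG2 v hv)) hv
  have hsplitP : ∀ x ∈ P, ∃ a ∈ G1.toSubmodule ⊓ P, ∃ b ∈ G2.toSubmodule ⊓ P, x = a + b := by
    intro x hxP
    obtain ⟨hx1, hx2⟩ := Submodule.mem_inf.mp hxP
    have : x ∈ G1.toSubmodule ⊔ G2.toSubmodule := by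
      rw [hcompl.sup_eq_top]; trivial
    obtain ⟨a, ha, b, hb, hab⟩ := Submodule.mem_sup.mp this
    obtain ⟨hA1, hB1⟩ := hdec _ hθstab1 hθstab2 x (LinearMap.mem_ker.mp hx1) a ha b hb hab
    obtain ⟨hA2, hB2⟩ := hdec _ hD2stab1 hD2stab2 x (LinearMap.mem_ker.mp hx2) a ha b hb hab
    exact ⟨a, Submodule.mem_inf.mpr ⟨ha, Submodule.mem_inf.mpr ⟨hA1, hA2⟩⟩,
      b, Submodule.mem_inf.mpr ⟨hb, Submodule.mem_inf.mpr ⟨hB1, hB2⟩⟩, hab.symm⟩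
  have hsplitQ : ∀ x ∈ Q, ∃ a ∈ G1.toSubmodule ⊓ Q, ∃ b ∈ G2.toSubmodule ⊓ Q, x = a + b := by
    intro x hxQ
    obtain ⟨hx1, hx2⟩ := Submodule.mem_inf.mp hxQ
    have : x ∈ G1.toSubmodule ⊔ G2.toSubmodule := by
      rw [hcompl.sup_eq_top]; trivial
    obtain ⟨a, ha, b, hb, hab⟩ := Submodule.mem_sup.mp this
    obtain ⟨hA1, hB1⟩ := hdec _ hθstab1 hθstab2 x (LinearMap.mem_ker.mp hx1) a ha b hb hab
    obtain ⟨hA2, hB2⟩ := hdec _ hDG1 hDG2 x (LinearMap.mem_ker.mp hx2) a ha b hb hab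
    exact ⟨a, Submodule.mem_inf.mpr ⟨ha, Submodule.mem_inf.mpr ⟨hA1, hA2⟩⟩,
      b, Submodule.mem_inf.mpr ⟨hb, Submodule.mem_inf.mpr ⟨hB1, hB2⟩⟩, hab.symm⟩
  -- bracketSpan pieces
  set C1 : Submodule ℝ g := bracketSpan (G1.toSubmodule ⊓ P) (G1.toSubmodule ⊓ P) with hC1def
  set C2 : Submodule ℝ g := bracketSpan (G2.toSubmodule ⊓ P) (G2.toSubmodule ⊓ P) with hC2def
  have hlie1 : ∀ u ∈ G1.toSubmodule, ∀ w : g, ⁅u, w⁆ ∈ G1.toSubmodule := by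
    intro u hu w
    have h1 : ⁅w, u⁆ ∈ G1 := G1.lie_mem hu
    have h2 : ⁅u, w⁆ = -⁅w, u⁆ := (lie_skew _ _).symm
    rw [h2]
    exact G1.toSubmodule.neg_mem h1
  have hlie2 : ∀ u ∈ G2.toSubmodule, ∀ w : g, ⁅u, w⁆ ∈ G2.toSubmodule := by
    intro u hu w
    have h1 : ⁅w, u⁆ ∈ G2 := G2.lie_mem hu
    have h2 : ⁅u, w⁆ = -⁅w, u⁆ := (lie_skew _ _).symm
    rw [h2]
    exact G2.toSubmodule.neg_mem h1
  have hC1le : C1 ≤ G1.toSubmodule ⊓ Q := by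
    apply Submodule.span_le.mpr
    rintro z ⟨x, hx, y, hy, rfl⟩
    refine Submodule.mem_inf.mpr ⟨hlie1 x (Submodule.mem_inf.mp hx).1 y, ?_⟩
    rw [← hext]
    exact Submodule.subset_span ⟨x, (Submodule.mem_inf.mp hx).2, y,
      (Submodule.mem_inf.mp hy).2, rfl⟩
  have hC2le : C2 ≤ G2.toSubmodule ⊓ Q := by
    apply Submodule.span_le.mpr
    rintro z ⟨x, hx, y, hy, rfl⟩
    refine Submodule.mem_inf.mpr ⟨hlie2 x (Submodule.mem_inf.mp hx).1 y, ?_⟩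
    rw [← hext]
    exact Submodule.subset_span ⟨x, (Submodule.mem_inf.mp hx).2, y,
      (Submodule.mem_inf.mp hy).2, rfl⟩
  have hQle : Q ≤ C1 ⊔ C2 := by
    rw [← hext]
    apply Submodule.span_le.mpr
    rintro z ⟨x, hx, y, hy, rfl⟩
    obtain ⟨x1, hx1, x2, hx2, rfl⟩ := hsplitP x hx
    obtain ⟨y1, hy1, y2, hy2, rfl⟩ := hsplitP y hy
    have hcross1 : ⁅x1, y2⁆ = 0 := by
      have hm : ⁅x1, y2⁆ ∈ G1.toSubmodule ⊓ G2.toSubmodule := Submodule.mem_inf.mpr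
        ⟨hlie1 x1 (Submodule.mem_inf.mp hx1).1 y2,
         G2.lie_mem (Submodule.mem_inf.mp hy2).1⟩
      have := hdisj.le_bot hm
      simpa using this
    have hcross2 : ⁅x2, y1⁆ = 0 := by
      have hm : ⁅x2, y1⁆ ∈ G1.toSubmodule ⊓ G2.toSubmodule := Submodule.mem_inf.mpr
        ⟨G1.lie_mem (Submodule.mem_inf.mp hy1).1,
         hlie2 x2 (Submodule.mem_inf.mp hx2).1 y1⟩
      have := hdisj.le_bot hm
      simpa using this
    have hexp : ⁅x1 + x2, y1 + y2⁆ = ⁅x1, y1⁆ + ⁅x2, y2⁆ := by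
      rw [add_lie, lie_add, lie_add, hcross1, hcross2]
      abel
    rw [hexp]
    exact Submodule.add_mem _
      (Submodule.mem_sup_left (Submodule.subset_span ⟨x1, hx1, y1, hy1, rfl⟩))
      (Submodule.mem_sup_right (Submodule.subset_span ⟨x2, hx2, y2, hy2, rfl⟩))
  have hfinal1 : C1 = G1.toSubmodule ⊓ Q := by
    refine le_antisymm hC1le ?_
    intro z hz
    obtain ⟨hz1, hzQ⟩ := Submodule.mem_inf.mp hz
    obtain ⟨c1, hc1, c2, hc2, hcz⟩ := Submodule.mem_sup.mp (hQle hzQ)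
    have hc2' : c2 ∈ G1.toSubmodule := by
      have : c2 = z - c1 := by rw [← hcz]; abel
      rw [this]
      exact G1.toSubmodule.sub_mem hz1 (Submodule.mem_inf.mp (hC1le hc1)).1
    have hc20 : c2 = 0 := by
      have := hdisj.le_bot (Submodule.mem_inf.mpr
        ⟨hc2', (Submodule.mem_inf.mp (hC2le hc2)).1⟩)
      simpa using this
    rw [← hcz, hc20, add_zero]
    exact hc1
  have hfinal2 : C2 = G2.toSubmodule ⊓ Q := by
    refine le_antisymm hC2le ?_
    intro z hz
    obtain ⟨hz2, hzQ⟩ := Submodule.mem_inf.mp hz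
    obtain ⟨c1, hc1, c2, hc2, hcz⟩ := Submodule.mem_sup.mp (hQle hzQ)
    have hc1' : c1 ∈ G2.toSubmodule := by
      have : c1 = z - c2 := by rw [← hcz]; abel
      rw [this]
      exact G2.toSubmodule.sub_mem hz2 (Submodule.mem_inf.mp (hC2le hc2)).1
    have hc10 : c1 = 0 := by
      have := hdisj.le_bot (Submodule.mem_inf.mpr
        ⟨(Submodule.mem_inf.mp (hC1le hc1)).1, hc1'⟩)
      simpa using this
    rw [← hcz, hc10, zero_add]
    exact hc2
  -- semisimplicity of G1
  have hss : LieAlgebra.IsSemisimple ℝ G1 := by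
    apply LieAlgebra.InvariantForm.isSemisimple_of_nondegenerate
      (Φ := B.restrict G1.toSubmodule)
    · exact B.nondegenerate_restrict_of_disjoint_orthogonal hBrefl
        (by rw [← hG2sub]; exact hdisj)
    · intro x y z
      show B ⁅(x : g), (y : g)⁆ (z : g) = -(B (y : g) ⁅(x : g), (z : g)⁆)
      have := hinv (x : g) (y : g) (z : g)
      linarith
    · intro x y h
      show B (y : g) (x : g) = 0
      rw [hsymm]
      exact h
    · intro I hI hab
      exact hI.1 (aux_no_abelian I hab)
  refine ⟨G1, G2, hcompl, ?_, ?_, ?_, ?_, ?_, ?_, ?_, ?_, ?_, ?_, ?_⟩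
  · -- orthogonality
    intro x hx y hy
    exact (hG2mem y).mp hy x hx
  · exact B.nondegenerate_restrict_of_disjoint_orthogonal hBrefl
      (by rw [← hG2sub]; exact hdisj)
  · -- nondegeneracy on G2
    refine (LinearMap.IsRefl.nondegenerate_iff_separatingLeft (B := B.restrict G2.toSubmodule) (fun x y h => hBrefl _ _ h)).mpr ?_
    rintro ⟨x, hx⟩ h
    have hx0 : x = 0 := by
      apply hnd.1
      intro z
      have hz : z ∈ G1.toSubmodule ⊔ G2.toSubmodule := by
        rw [hcompl.sup_eq_top]; trivial
      obtain ⟨a, ha, b, hb, hab⟩ := Submodule.mem_sup.mp hz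
      have h1 : B x a = 0 := by
        rw [hsymm]
        exact (hG2mem x).mp hx a ha
      have h2 : B x b = 0 := h ⟨b, hb⟩
      rw [← hab, map_add, h1, h2, add_zero]
    exact Subtype.ext hx0
  · exact hDG1
  · exact hDG2
  · exact hmapθ1
  · exact hmapθ2
  · exact Or.inr hss
  · -- no simple ideals in G2
    rintro ⟨I, hIne, hIle, hIsimple⟩
    apply hIne
    have hIG1 : I ≤ G1 := simple_le_simpleSum hIsimple
    rw [eq_bot_iff]
    intro x hx
    have : x ∈ G1.toSubmodule ⊓ G2.toSubmodule :=
      Submodule.mem_inf.mpr ⟨hIG1 hx, hIle hx⟩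
    have := hdisj.le_bot this
    simpa using this
  · exact hfinal1
  · exact hfinal2
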